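/- Let f₁, g₁ be continuous on [a,b] and let (φ, ψ) be a nontrivial solution of φ' = f₁(t)ψ, ψ' = -g₁(t)φ. Then φ has only finitely many null-classes on [a,b], and these null-classes are linearly ordered by the relation ≺ (x ≺ y iff every element of x is less than every element of y). -/

import Mathlib

open Set intervalIntegral

/-- The zero set of `φ` within `[a,b]`. -/
def ZeroSet (φ : ℝ → ℝ) (a b : ℝ) : Set ℝ := {t ∈ Set.Icc a b | φ t = 0}

/-- A null-element of `φ`: a connected component of the zero set of `φ` in `[a,b]`. -/
def IsNullElement (φ : ℝ → ℝ) (a b : ℝ) (N : Set ℝ) : Prop :=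
  ∃ t ∈ ZeroSet φ a b, N = connectedComponentIn (ZeroSet φ a b) t

/-- Null-elements `N₁`, `N₂` of `φ` are congenerous (with respect to the weight `f·y`) if
`|∫_{t₁}^{t} f y| < π` for all `t₁ ∈ N₁`, `t₂ ∈ N₂` and all `t` between `t₁` and `t₂`. -/
def Congenerous (f y φ : ℝ → ℝ) (a b : ℝ) (N₁ N₂ : Set ℝ) : Prop :=
  IsNullElement φ a b N₁ ∧ IsNullElement φ a b N₂ ∧
  ∀ t₁ ∈ N₁, ∀ t₂ ∈ N₂, ∀ t ∈ Set.uIcc t₁ t₂, |∫ τ in t₁..t, f τ * y τ| < Real.pi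

/-- A null-class of `φ`: an equivalence class of congenerous null-elements. -/
def IsNullClass (f y φ : ℝ → ℝ) (a b : ℝ) (C : Set (Set ℝ)) : Prop :=
  ∃ N, IsNullElement φ a b N ∧ C = {M | Congenerous f y φ a b N M}

/-- The ordering `x ≺ y` on subsets of `ℝ`: every element of `x` is less than
every element of `y`. -/
def SetLT (x y : Set ℝ) : Prop := ∀ s ∈ x, ∀ t ∈ y, s < t

lemma core_null_classes (f y φ : ℝ → ℝ) (a b α K : ℝ) (hK : 0 < K)
    (θ : ℝ → ℝ)
    (hθc : ContinuousOn θ (Set.Icc a b))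
    (hθint : ∀ t₁ ∈ Set.Icc a b, ∀ t ∈ Set.Icc a b,
      (∫ τ in t₁..t, f τ * y τ) = θ t - θ t₁)
    (hlip : ∀ s ∈ Set.Icc a b, ∀ t ∈ Set.Icc a b, |θ t - θ s| ≤ K * |t - s|)
    (hzero : ∀ t ∈ Set.Icc a b, (φ t = 0 ↔ ∃ n : ℤ, θ t - α = n * Real.pi)) :
    {C : Set (Set ℝ) | IsNullClass f y φ a b C}.Finite ∧
    ∀ C₁ C₂ : Set (Set ℝ), IsNullClass f y φ a b C₁ → IsNullClass f y φ a b C₂ →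
      C₁ ≠ C₂ → SetLT (⋃₀ C₁) (⋃₀ C₂) ∨ SetLT (⋃₀ C₂) (⋃₀ C₁) := by
  classical
  have hπ := Real.pi_pos
  set Z := ZeroSet φ a b with hZdef
  have hZsub : Z ⊆ Set.Icc a b := fun t ht => ht.1
  have hlat : ∀ t ∈ Z, ∃ n : ℤ, θ t - α = n * Real.pi := fun t ht => (hzero t ht.1).1 ht.2
  -- two lattice values within π of each other are equal
  have hlat_eq : ∀ s ∈ Z, ∀ t ∈ Z, |θ t - θ s| < Real.pi → θ t = θ s := by
    intro s hs t ht h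
    obtain ⟨n, hn⟩ := hlat s hs
    obtain ⟨m, hm⟩ := hlat t ht
    have hst : θ t - θ s = ((m - n : ℤ) : ℝ) * Real.pi := by push_cast; linarith
    rw [hst] at h
    rw [abs_mul, abs_of_pos hπ] at h
    have h1 : |((m - n : ℤ) : ℝ)| < 1 := by
      by_contra hc
      push_neg at hc
      nlinarith
    have h2 : |m - n| < 1 := by
      have : ((|m - n| : ℤ) : ℝ) < ((1 : ℤ) : ℝ) := by
        rw [Int.cast_abs]
        simpa using h1
      exact_mod_cast this
    have h3 : m - n = 0 := by
      have := abs_lt.mp h2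
      omega
    rw [h3] at hst
    simp only [Int.cast_zero, zero_mul] at hst
    linarith
  have hlat_ge : ∀ s ∈ Z, ∀ t ∈ Z, θ t ≠ θ s → Real.pi ≤ |θ t - θ s| := by
    intro s hs t ht h
    by_contra hc
    push_neg at hc
    exact h (hlat_eq s hs t ht hc)
  -- basic facts about null-elements
  have hNE : ∀ N, IsNullElement φ a b N →
      (∃ s, s ∈ N) ∧ N ⊆ Z ∧ ∀ s ∈ N, ∀ t ∈ N, Set.uIcc s t ⊆ N := by
    rintro N ⟨t₀, ht₀, rfl⟩
    refine ⟨⟨t₀, mem_connectedComponentIn ht₀⟩, connectedComponentIn_subset _ _, ?_⟩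
    intro s hs t ht
    exact (isPreconnected_connectedComponentIn).ordConnected.uIcc_subset hs ht
  have hUIcc : ∀ {s t w : ℝ}, s ∈ Set.Icc a b → t ∈ Set.Icc a b → w ∈ Set.uIcc s t →
      w ∈ Set.Icc a b := by
    intro s t w hs ht hw
    rcases Set.mem_uIcc.mp hw with ⟨h1, h2⟩ | ⟨h1, h2⟩
    · exact ⟨le_trans hs.1 h1, le_trans h2 ht.2⟩
    · exact ⟨le_trans ht.1 h1, le_trans h2 hs.2⟩
  -- θ is constant on intervals inside Z
  have hconst : ∀ s t : ℝ, Set.uIcc s t ⊆ Z → θ s = θ t := by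
    have key : ∀ s t : ℝ, Set.uIcc s t ⊆ Z → θ s < θ t → False := by
      intro s t hst hlt
      have hsZ : s ∈ Z := hst left_mem_uIcc
      have htZ : t ∈ Z := hst right_mem_uIcc
      obtain ⟨n, hn⟩ := hlat s hsZ
      have hcont : ContinuousOn θ (Set.uIcc s t) := hθc.mono (hst.trans hZsub)
      have hge : Real.pi ≤ |θ t - θ s| := hlat_ge s hsZ t htZ (ne_of_gt hlt)
      rw [abs_of_pos (by linarith)] at hge
      have hmem : θ s + Real.pi / 2 ∈ Set.uIcc (θ s) (θ t) := by
        rw [Set.mem_uIcc]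
        left
        constructor <;> linarith
      obtain ⟨u, hu, hθu⟩ := intermediate_value_uIcc hcont hmem
      obtain ⟨k, hk⟩ := hlat u (hst hu)
      have : ((2 * k - 2 * n - 1 : ℤ) : ℝ) * Real.pi = 0 := by push_cast; linarith
      rcases mul_eq_zero.mp this with h | h
      · have : (2 * k - 2 * n - 1 : ℤ) = 0 := by exact_mod_cast h
        omega
      · exact Real.pi_ne_zero h
    intro s t hst
    rcases lt_trichotomy (θ s) (θ t) with h | h | h
    · exact absurd h fun h => key s t hst h
    · exact h
    · exact absurd h fun h => key t s (Set.uIcc_comm s t ▸ hst) h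
  have hconstN : ∀ N, IsNullElement φ a b N → ∀ s ∈ N, ∀ t ∈ N, θ s = θ t := by
    intro N hN s hs t ht
    obtain ⟨-, hsub, hconv⟩ := hNE N hN
    exact hconst s t ((hconv s hs t ht).trans hsub)
  have hInt : ∀ t₁ ∈ Set.Icc a b, ∀ t ∈ Set.Icc a b,
      |∫ τ in t₁..t, f τ * y τ| = |θ t - θ t₁| := by
    intro t₁ h₁ t ht
    rw [hθint t₁ h₁ t ht]
  -- characterization of congeniality in terms of any chosen points
  have hCong : ∀ N₁ N₂, IsNullElement φ a b N₁ → IsNullElement φ a b N₂ →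
      ∀ s₁ ∈ N₁, ∀ s₂ ∈ N₂,
      (Congenerous f y φ a b N₁ N₂ ↔
        (θ s₁ = θ s₂ ∧ ∀ u ∈ Set.uIcc s₁ s₂, |θ u - θ s₁| < Real.pi)) := by
    intro N₁ N₂ h₁ h₂ s₁ hs₁ s₂ hs₂
    obtain ⟨-, hsub₁, hconv₁⟩ := hNE N₁ h₁
    obtain ⟨-, hsub₂, hconv₂⟩ := hNE N₂ h₂
    have hs₁I : s₁ ∈ Set.Icc a b := hZsub (hsub₁ hs₁)
    have hs₂I : s₂ ∈ Set.Icc a b := hZsub (hsub₂ hs₂)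
    constructor
    · rintro ⟨-, -, h⟩
      have hband : ∀ u ∈ Set.uIcc s₁ s₂, |θ u - θ s₁| < Real.pi := by
        intro u hu
        have := h s₁ hs₁ s₂ hs₂ u hu
        rwa [hInt s₁ hs₁I u (hUIcc hs₁I hs₂I hu)] at this
      exact ⟨(hlat_eq s₁ (hsub₁ hs₁) s₂ (hsub₂ hs₂)
        (hband s₂ Set.right_mem_uIcc)).symm, hband⟩
    · rintro ⟨hval, hband⟩
      refine ⟨h₁, h₂, ?_⟩
      intro t₁ ht₁ t₂ ht₂ t ht
      have ht₁I : t₁ ∈ Set.Icc a b := hZsub (hsub₁ ht₁)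
      have ht₂I : t₂ ∈ Set.Icc a b := hZsub (hsub₂ ht₂)
      have htI : t ∈ Set.Icc a b := hUIcc ht₁I ht₂I ht
      rw [hInt t₁ ht₁I t htI]
      have hθt₁ : θ t₁ = θ s₁ := hconstN N₁ h₁ t₁ ht₁ s₁ hs₁
      rw [hθt₁]
      have hcover : t ∈ Set.uIcc t₁ s₁ ∪ (Set.uIcc s₁ s₂ ∪ Set.uIcc s₂ t₂) := by
        rcases Set.uIcc_subset_uIcc_union_uIcc (b := s₁) ht with h | h
        · exact Or.inl h
        · exact Or.inr (Set.uIcc_subset_uIcc_union_uIcc (b := s₂) h)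
      rcases hcover with h | h | h
      · have : θ t = θ s₁ := hconstN N₁ h₁ t (hconv₁ t₁ ht₁ s₁ hs₁ h) s₁ hs₁
        rw [this]
        simpa using hπ
      · exact hband t h
      · have : θ t = θ s₂ := hconstN N₂ h₂ t (hconv₂ s₂ hs₂ t₂ ht₂ h) s₂ hs₂
        rw [this, ← hval]
        simpa using hπ
  -- congenerous null-elements determine the same class
  have hclass_eq : ∀ N₁ N₂, IsNullElement φ a b N₁ → IsNullElement φ a b N₂ →
      Congenerous f y φ a b N₁ N₂ →
      {M | Congenerous f y φ a b N₁ M} = {M | Congenerous f y φ a b N₂ M} := by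
    intro N₁ N₂ h₁ h₂ hc
    obtain ⟨⟨s₁, hs₁⟩, hsub₁, -⟩ := hNE N₁ h₁
    obtain ⟨⟨s₂, hs₂⟩, hsub₂, -⟩ := hNE N₂ h₂
    obtain ⟨hval, hband⟩ := (hCong N₁ N₂ h₁ h₂ s₁ hs₁ s₂ hs₂).mp hc
    have htrans : ∀ (p q : ℝ) (Np Nq : Set ℝ), IsNullElement φ a b Np →
        IsNullElement φ a b Nq → p ∈ Np → q ∈ Nq → θ p = θ q →
        (∀ u ∈ Set.uIcc p q, |θ u - θ p| < Real.pi) →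
        ∀ M, Congenerous f y φ a b Np M → Congenerous f y φ a b Nq M := by
      intro p q Np Nq hp hq hpN hqN hpq hpqband M hM
      have hMne : IsNullElement φ a b M := hM.2.1
      obtain ⟨⟨m, hm⟩, hsubM, -⟩ := hNE M hMne
      obtain ⟨hv, hb⟩ := (hCong Np M hp hMne p hpN m hm).mp hM
      rw [hCong Nq M hq hMne q hqN m hm]
      refine ⟨by rw [← hpq, hv], ?_⟩
      intro u hu
      rcases Set.uIcc_subset_uIcc_union_uIcc (b := p) hu with h | h
      · rw [Set.uIcc_comm] at h
        have := hpqband u h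
        rwa [hpq] at this
      · have := hb u h
        rwa [hpq] at this
    ext M
    simp only [Set.mem_setOf_eq]
    constructor
    · exact htrans s₁ s₂ N₁ N₂ h₁ h₂ hs₁ hs₂ hval hband M
    · refine htrans s₂ s₁ N₂ N₁ h₂ h₁ hs₂ hs₁ hval.symm ?_ M
      intro u hu
      rw [Set.uIcc_comm] at hu
      have := hband u hu
      rwa [hval] at this
  -- separation of non-congenerous null-elements
  have hsep : ∀ N₁ N₂, IsNullElement φ a b N₁ → IsNullElement φ a b N₂ →
      ¬ Congenerous f y φ a b N₁ N₂ →
      ∀ s₁ ∈ N₁, ∀ s₂ ∈ N₂, Real.pi / K ≤ |s₂ - s₁| := by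
    intro N₁ N₂ h₁ h₂ hnc s₁ hs₁ s₂ hs₂
    obtain ⟨-, hsub₁, -⟩ := hNE N₁ h₁
    obtain ⟨-, hsub₂, -⟩ := hNE N₂ h₂
    have hs₁I : s₁ ∈ Set.Icc a b := hZsub (hsub₁ hs₁)
    have hs₂I : s₂ ∈ Set.Icc a b := hZsub (hsub₂ hs₂)
    rw [hCong N₁ N₂ h₁ h₂ s₁ hs₁ s₂ hs₂] at hnc
    rw [div_le_iff₀ hK]
    push_neg at hnc
    by_cases hval : θ s₁ = θ s₂
    · obtain ⟨u, hu, hge⟩ := hnc hval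
      have huI : u ∈ Set.Icc a b := hUIcc hs₁I hs₂I hu
      have h1 : |θ u - θ s₁| ≤ K * |u - s₁| := hlip s₁ hs₁I u huI
      have h2 : |u - s₁| ≤ |s₂ - s₁| := by
        rcases Set.mem_uIcc.mp hu with ⟨ha1, ha2⟩ | ⟨ha1, ha2⟩
        · rw [abs_of_nonneg (by linarith)]
          have := le_abs_self (s₂ - s₁)
          linarith
        · rw [abs_of_nonpos (by linarith)]
          have := neg_abs_le (s₂ - s₁)
          linarith
      nlinarith [abs_nonneg (s₂ - s₁)]
    · have hge : Real.pi ≤ |θ s₂ - θ s₁| :=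
        hlat_ge s₁ (hsub₁ hs₁) s₂ (hsub₂ hs₂) (fun h => hval h.symm)
      have h1 : |θ s₂ - θ s₁| ≤ K * |s₂ - s₁| := hlip s₁ hs₁I s₂ hs₂I
      linarith
  have hncong : ∀ N₁ N₂, IsNullElement φ a b N₁ → IsNullElement φ a b N₂ →
      {M | Congenerous f y φ a b N₁ M} ≠ {M | Congenerous f y φ a b N₂ M} →
      ¬ Congenerous f y φ a b N₁ N₂ :=
    fun N₁ N₂ h₁ h₂ h hc => h (hclass_eq N₁ N₂ h₁ h₂ hc)
  constructor
  · -- finiteness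
    set g : Set (Set ℝ) → ℝ := fun C =>
      if h : IsNullClass f y φ a b C then (hNE h.choose h.choose_spec.1).1.choose else 0
      with hgdef
    have hgmem : ∀ C (h : IsNullClass f y φ a b C), g C ∈ h.choose := by
      intro C h
      rw [hgdef]
      simp only [dif_pos h]
      exact (hNE h.choose h.choose_spec.1).1.choose_spec
    have hsepg : ∀ C₁ C₂, IsNullClass f y φ a b C₁ → IsNullClass f y φ a b C₂ →
        C₁ ≠ C₂ → Real.pi / K ≤ |g C₂ - g C₁| := by
      intro C₁ C₂ h₁ h₂ hne
      have hN₁ := h₁.choose_spec.1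
      have hN₂ := h₂.choose_spec.1
      have hnc : ¬ Congenerous f y φ a b h₁.choose h₂.choose := by
        apply hncong _ _ hN₁ hN₂
        rw [← h₁.choose_spec.2, ← h₂.choose_spec.2]
        exact hne
      exact hsep _ _ hN₁ hN₂ hnc _ (hgmem C₁ h₁) _ (hgmem C₂ h₂)
    have hgI : ∀ C (h : IsNullClass f y φ a b C), g C ∈ Set.Icc a b := by
      intro C h
      exact hZsub ((hNE h.choose h.choose_spec.1).2.1 (hgmem C h))
    set G : Set (Set ℝ) → ℤ := fun C => ⌊(g C - a) * K / Real.pi⌋ with hGdef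
    have hGinj : Set.InjOn G {C | IsNullClass f y φ a b C} := by
      intro C₁ h₁ C₂ h₂ heq
      simp only [hGdef] at heq
      by_contra hne
      have hsep' := hsepg C₁ C₂ h₁ h₂ hne
      set x₁ := (g C₁ - a) * K / Real.pi
      set x₂ := (g C₂ - a) * K / Real.pi
      have hd : x₂ - x₁ = (g C₂ - g C₁) * K / Real.pi := by
        simp only [x₁, x₂]
        ring
      have habs : |x₂ - x₁| = |g C₂ - g C₁| * K / Real.pi := by
        rw [hd, abs_div, abs_mul, abs_of_pos hK, abs_of_pos hπ]
      have h1 : (1 : ℝ) ≤ |x₂ - x₁| := by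
        rw [habs, le_div_iff₀ hπ, one_mul]
        rw [div_le_iff₀ hK] at hsep'
        nlinarith
      have h2 : |x₂ - x₁| < 1 := by
        have e1 := Int.lt_floor_add_one x₁
        have e2 := Int.floor_le x₁
        have e3 := Int.lt_floor_add_one x₂
        have e4 := Int.floor_le x₂
        rw [abs_lt]
        have : (⌊x₁⌋ : ℝ) = (⌊x₂⌋ : ℝ) := by rw [heq]
        constructor <;> nlinarith
      linarith
    have himage : (G '' {C | IsNullClass f y φ a b C}).Finite := by
      apply (Set.finite_Icc (0 : ℤ) ⌊(b - a) * K / Real.pi⌋).subset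
      rintro n ⟨C, hC, rfl⟩
      have hmem := hgI C hC
      constructor
      · apply Int.floor_nonneg.mpr
        apply div_nonneg _ hπ.le
        apply mul_nonneg _ hK.le
        linarith [hmem.1]
      · apply Int.floor_le_floor
        have h1 : g C - a ≤ b - a := by linarith [hmem.2]
        have h2 : (0:ℝ) ≤ K := hK.le
        gcongr
    exact Set.Finite.of_finite_image himage hGinj
  · -- ordering
    have main : ∀ (N N' : Set ℝ), IsNullElement φ a b N → IsNullElement φ a b N' →
        ∀ s ∈ N, ∀ s' ∈ N', ¬ Congenerous f y φ a b N N' → s < s' →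
        SetLT (⋃₀ {M | Congenerous f y φ a b N M})
              (⋃₀ {M | Congenerous f y φ a b N' M}) := by
      intro N N' hN hN' s hs s' hs' hnc hlt
      obtain ⟨-, hsubN, -⟩ := hNE N hN
      obtain ⟨-, hsubN', -⟩ := hNE N' hN'
      have hsI : s ∈ Set.Icc a b := hZsub (hsubN hs)
      have hs'I : s' ∈ Set.Icc a b := hZsub (hsubN' hs')
      intro u hu v hv
      obtain ⟨M, hM, huM⟩ := hu
      obtain ⟨M', hM', hvM'⟩ := hv
      have hM : Congenerous f y φ a b N M := hM
      have hM' : Congenerous f y φ a b N' M' := hM'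
      obtain ⟨-, hsubM, -⟩ := hNE M hM.2.1
      obtain ⟨-, hsubM', -⟩ := hNE M' hM'.2.1
      have huI : u ∈ Set.Icc a b := hZsub (hsubM huM)
      have hvI : v ∈ Set.Icc a b := hZsub (hsubM' hvM')
      have hband_u : ∀ w ∈ Set.uIcc s u, |θ w - θ s| < Real.pi := by
        intro w hw
        have := hM.2.2 s hs u huM w hw
        rwa [hInt s hsI w (hUIcc hsI huI hw)] at this
      have hband_v : ∀ w ∈ Set.uIcc s' v, |θ w - θ s'| < Real.pi := by
        intro w hw
        have := hM'.2.2 s' hs' v hvM' w hw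
        rwa [hInt s' hs'I w (hUIcc hs'I hvI hw)] at this
      have hθu : θ u = θ s :=
        hlat_eq s (hsubN hs) u (hsubM huM) (hband_u u Set.right_mem_uIcc)
      have hθv : θ v = θ s' :=
        hlat_eq s' (hsubN' hs') v (hsubM' hvM') (hband_v v Set.right_mem_uIcc)
      rw [hCong N N' hN hN' s hs s' hs'] at hnc
      push_neg at hnc
      by_contra hle
      push_neg at hle
      by_cases hval : θ s = θ s'
      · obtain ⟨w, hw, hwge⟩ := hnc hval
        rw [Set.uIcc_of_le hlt.le, Set.mem_Icc] at hw
        rcases le_or_gt w u with h | h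
        · have hwm : w ∈ Set.uIcc s u := by
            rw [Set.mem_uIcc]
            exact Or.inl ⟨hw.1, h⟩
          exact absurd (hband_u w hwm) (not_lt.mpr hwge)
        · have hwm : w ∈ Set.uIcc s' v := by
            rw [Set.mem_uIcc]
            exact Or.inr ⟨by linarith, hw.2⟩
          have hb := hband_v w hwm
          rw [← hval] at hb
          exact absurd hb (not_lt.mpr hwge)
      · have hge : Real.pi ≤ |θ s' - θ s| :=
          hlat_ge s (hsubN hs) s' (hsubN' hs') (fun h => hval h.symm)
        rcases le_or_gt s' u with h | h
        · have hwm : s' ∈ Set.uIcc s u := by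
            rw [Set.mem_uIcc]
            exact Or.inl ⟨hlt.le, h⟩
          exact absurd (hband_u s' hwm) (not_lt.mpr hge)
        · have hwm : u ∈ Set.uIcc s' v := by
            rw [Set.mem_uIcc]
            exact Or.inr ⟨hle, h.le⟩
          have hb := hband_v u hwm
          rw [hθu, abs_sub_comm] at hb
          exact absurd hb (not_lt.mpr hge)
    rintro C₁ C₂ ⟨N₁, hN₁, rfl⟩ ⟨N₂, hN₂, rfl⟩ hne
    obtain ⟨⟨s₁, hs₁⟩, hsub₁, -⟩ := hNE N₁ hN₁
    obtain ⟨⟨s₂, hs₂⟩, hsub₂, -⟩ := hNE N₂ hN₂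
    have hnc : ¬ Congenerous f y φ a b N₁ N₂ := hncong N₁ N₂ hN₁ hN₂ hne
    have hnc' : ¬ Congenerous f y φ a b N₂ N₁ := hncong N₂ N₁ hN₂ hN₁ hne.symm
    have hs12 : s₁ ≠ s₂ := by
      intro h
      have := hsep N₁ N₂ hN₁ hN₂ hnc s₁ hs₁ s₂ hs₂
      rw [h] at this
      simp at this
      nlinarith [div_pos hπ hK]
    rcases lt_or_gt_of_ne hs12 with h | h
    · exact Or.inl (main N₁ N₂ hN₁ hN₂ s₁ hs₁ s₂ hs₂ hnc h)
    · exact Or.inr (main N₂ N₁ hN₂ hN₁ s₂ hs₂ s₁ hs₁ hnc' h)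

/-- For any nontrivial solution `(φ,ψ)` of `φ' = f₁ ψ, ψ' = -g₁ φ`, the function `φ` has
only finitely many null-classes on `[a,b]`, and these null-classes are linearly ordered
by `≺`.  Here `y = Im z > 0` where `z` solves `z' + f₁ z² + g₁ = 0`, `z(a) = i`. -/
theorem null_classes_finite_and_ordered
    (a b : ℝ) (hab : a < b) (f₁ g₁ : ℝ → ℝ)
    (hf : ContinuousOn f₁ (Set.Icc a b)) (hg : ContinuousOn g₁ (Set.Icc a b))
    (φ ψ : ℝ → ℝ)
    (hφ : ∀ t ∈ Set.Icc a b, HasDerivAt φ (f₁ t * ψ t) t)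
    (hψ : ∀ t ∈ Set.Icc a b, HasDerivAt ψ (-(g₁ t * φ t)) t)
    (hnt : ∃ t ∈ Set.Icc a b, φ t ≠ 0 ∨ ψ t ≠ 0)
    (z : ℝ → ℂ)
    (hz : ∀ t ∈ Set.Icc a b, HasDerivAt z (-((f₁ t : ℂ) * z t ^ 2 + (g₁ t : ℂ))) t)
    (hza : z a = Complex.I)
    (hzim : ∀ t ∈ Set.Icc a b, 0 < (z t).im) :
    {C : Set (Set ℝ) | IsNullClass f₁ (fun t => (z t).im) φ a b C}.Finite ∧
    ∀ C₁ C₂ : Set (Set ℝ),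
      IsNullClass f₁ (fun t => (z t).im) φ a b C₁ →
      IsNullClass f₁ (fun t => (z t).im) φ a b C₂ →
      C₁ ≠ C₂ → SetLT (⋃₀ C₁) (⋃₀ C₂) ∨ SetLT (⋃₀ C₂) (⋃₀ C₁) := by
    classical
  have hab' : a ≤ b := hab.le
  have haI : a ∈ Set.Icc a b := ⟨le_refl a, hab'⟩
  have hzc : ContinuousOn z (Set.Icc a b) := fun t ht =>
    (hz t ht).continuousAt.continuousWithinAt
  -- clamp to [a,b]
  set κ : ℝ → ℝ := fun t => max a (min b t) with hκdef
  have hκcont : Continuous κ := continuous_const.max (continuous_const.min continuous_id)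
  have hκmem : ∀ t, κ t ∈ Set.Icc a b :=
    fun t => ⟨le_max_left _ _, max_le hab' (min_le_left _ _)⟩
  have hκid : ∀ t ∈ Set.Icc a b, κ t = t := by
    intro t ht
    simp only [hκdef]
    rw [min_eq_right ht.2, max_eq_right ht.1]
  set F : ℝ → ℂ := fun t => (f₁ (κ t) : ℂ) * z (κ t) with hFdef
  have hFcont : Continuous F := by
    have h1 : Continuous fun t => f₁ (κ t) := hf.comp_continuous hκcont hκmem
    have h2 : Continuous fun t => z (κ t) := hzc.comp_continuous hκcont hκmem
    exact (Complex.continuous_ofReal.comp h1).mul h2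
  set E : ℝ → ℂ := fun t => ∫ τ in a..t, F τ with hEdef
  have hEderiv : ∀ t : ℝ, HasDerivAt E (F t) t := by
    intro t
    exact intervalIntegral.integral_hasDerivAt_right (hFcont.intervalIntegrable a t)
      (hFcont.stronglyMeasurableAtFilter _ _) hFcont.continuousAt
  have hEcont : Continuous E := continuous_iff_continuousAt.mpr fun t => (hEderiv t).continuousAt
  set χ : ℝ → ℂ := fun t => (ψ t : ℂ) - z t * (φ t : ℂ) with hχdef
  set W : ℝ → ℂ := fun t => χ t * Complex.exp (E t) with hWdef
  have hWderiv : ∀ t ∈ Set.Icc a b, HasDerivAt W 0 t := by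
    intro t ht
    have hψ' : HasDerivAt (fun s => ((ψ s : ℝ) : ℂ)) ((-(g₁ t * φ t) : ℝ) : ℂ) t :=
      (hψ t ht).ofReal_comp
    have hφ' : HasDerivAt (fun s => ((φ s : ℝ) : ℂ)) ((f₁ t * ψ t : ℝ) : ℂ) t :=
      (hφ t ht).ofReal_comp
    have hχ' : HasDerivAt χ
        (((-(g₁ t * φ t) : ℝ) : ℂ) -
          (-((f₁ t : ℂ) * z t ^ 2 + (g₁ t : ℂ)) * (φ t : ℂ) +
            z t * ((f₁ t * ψ t : ℝ) : ℂ))) t :=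
      hψ'.sub (((hz t ht)).mul hφ')
    have hexp : HasDerivAt (fun s => Complex.exp (E s)) (Complex.exp (E t) * F t) t :=
      (hEderiv t).cexp
    have hmul := hχ'.mul hexp
    have hκt : κ t = t := hκid t ht
    have hFt : F t = (f₁ t : ℂ) * z t := by rw [hFdef]; simp only [hκt]
    refine HasDerivAt.congr_deriv (f := W) hmul ?_
    rw [hFt]
    push_cast
    ring
  have hWcont : ContinuousOn W (Set.Icc a b) := fun t ht =>
    (hWderiv t ht).continuousAt.continuousWithinAt
  set w₀ : ℂ := (ψ a : ℂ) - Complex.I * (φ a : ℂ) with hw₀def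
  have hWa : W a = w₀ := by
    simp only [hWdef, hχdef, hEdef, intervalIntegral.integral_same, Complex.exp_zero,
      mul_one, hza, hw₀def]
  have hWconst : ∀ t ∈ Set.Icc a b, W t = w₀ := by
    intro t ht
    rw [← hWa]
    exact constant_of_has_deriv_right_zero hWcont
      (fun s hs => (hWderiv s (Set.Ico_subset_Icc_self hs)).hasDerivWithinAt) t ht
  have hχeq : ∀ t ∈ Set.Icc a b, χ t = w₀ * Complex.exp (-E t) := by
    intro t ht
    rw [Complex.exp_neg, eq_mul_inv_iff_mul_eq₀ (Complex.exp_ne_zero _)]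
    exact hWconst t ht
  -- w₀ ≠ 0
  have hw₀ : w₀ ≠ 0 := by
    intro h0
    obtain ⟨t, ht, hnt'⟩ := hnt
    have hχt : χ t = 0 := by rw [hχeq t ht, h0, zero_mul]
    have him : (z t).im * φ t = 0 := by
      have := congrArg Complex.im hχt
      simpa [hχdef, Complex.sub_im, Complex.mul_im] using this.symm
    have hφ0 : φ t = 0 := by
      rcases mul_eq_zero.mp him with h | h
      · exact absurd h (ne_of_gt (hzim t ht))
      · exact h
    have hψ0 : ψ t = 0 := by
      have := congrArg Complex.re hχt
      simpa [hχdef, hφ0] using this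
    rcases hnt' with h | h
    · exact h hφ0
    · exact h hψ0
  set R : ℝ := ‖w₀‖ with hRdef
  have hR : 0 < R := norm_pos_iff.mpr hw₀
  set α : ℝ := Complex.arg w₀ with hαdef
  set θ : ℝ → ℝ := fun t => (E t).im with hθdef
  -- key imaginary-part identity
  have him : ∀ t ∈ Set.Icc a b,
      (z t).im * φ t = R * (Real.exp (-(E t).re) * Real.sin (θ t - α)) := by
    intro t ht
    have h1 : -((z t).im * φ t) = (χ t).im := by
      simp [hχdef, Complex.sub_im, Complex.mul_im]
    have h2 : χ t = (R : ℂ) * Complex.exp ((α : ℂ) * Complex.I - E t) := by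
      rw [hχeq t ht, sub_eq_add_neg, Complex.exp_add, ← mul_assoc]
      congr 1
      rw [hRdef, hαdef]
      exact (Complex.norm_mul_exp_arg_mul_I w₀).symm
    have h3 : ((α : ℂ) * Complex.I - E t).re = -(E t).re := by
      simp [Complex.sub_re, Complex.mul_re]
    have h4 : ((α : ℂ) * Complex.I - E t).im = α - θ t := by
      simp [hθdef, Complex.sub_im, Complex.mul_im]
    have h5 : (χ t).im = R * (Real.exp (-(E t).re) * Real.sin (α - θ t)) := by
      rw [h2]
      rw [show ((R : ℂ) * Complex.exp ((α : ℂ) * Complex.I - E t)).im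
          = R * (Complex.exp ((α : ℂ) * Complex.I - E t)).im by
        simp [Complex.mul_im]]
      rw [Complex.exp_im, h3, h4]
    have h6 : Real.sin (α - θ t) = -Real.sin (θ t - α) := by
      rw [← Real.sin_neg, neg_sub]
    rw [h5, h6] at h1
    linarith
  -- zero characterization
  have hzero : ∀ t ∈ Set.Icc a b, (φ t = 0 ↔ ∃ n : ℤ, θ t - α = n * Real.pi) := by
    intro t ht
    have h := him t ht
    have hy := hzim t ht
    constructor
    · intro h0
      rw [h0, mul_zero] at h
      have hsin : Real.sin (θ t - α) = 0 := by
        have hRe : R * Real.exp (-(E t).re) ≠ 0 :=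
          ne_of_gt (mul_pos hR (Real.exp_pos _))
        have : R * Real.exp (-(E t).re) * Real.sin (θ t - α) = 0 := by
          rw [mul_assoc]; linarith
        exact (mul_eq_zero.mp this).resolve_left hRe
      rw [Real.sin_eq_zero_iff] at hsin
      obtain ⟨n, hn⟩ := hsin
      exact ⟨n, hn.symm⟩
    · rintro ⟨n, hn⟩
      have hsin : Real.sin (θ t - α) = 0 := by rw [hn]; exact Real.sin_int_mul_pi n
      rw [hsin, mul_zero, mul_zero] at h
      exact (mul_eq_zero.mp h).resolve_left (ne_of_gt hy)
  -- integral identity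
  have hint : ∀ t₁ ∈ Set.Icc a b, ∀ t ∈ Set.Icc a b,
      (∫ τ in t₁..t, f₁ τ * (fun s => (z s).im) τ) = θ t - θ t₁ := by
    intro t₁ h₁ t ht
    have hEq : E t - E t₁ = ∫ τ in t₁..t, F τ :=
      intervalIntegral.integral_interval_sub_left (hFcont.intervalIntegrable a t)
        (hFcont.intervalIntegrable a t₁)
    have hUI : Set.uIcc t₁ t ⊆ Set.Icc a b := by
      rw [Set.uIcc_eq_union]
      rintro w (hw | hw)
      · exact ⟨le_trans h₁.1 hw.1, le_trans hw.2 ht.2⟩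
      · exact ⟨le_trans ht.1 hw.1, le_trans hw.2 h₁.2⟩
    calc (∫ τ in t₁..t, f₁ τ * (z τ).im) = ∫ τ in t₁..t, (F τ).im := by
          apply intervalIntegral.integral_congr
          intro w hw
          have hκw : κ w = w := hκid w (hUI hw)
          simp [hFdef, hκw, Complex.mul_im]
      _ = Complex.imCLM (∫ τ in t₁..t, F τ) := by
          rw [← Complex.imCLM.intervalIntegral_comp_comm (hFcont.intervalIntegrable t₁ t)]
          rfl
      _ = (E t - E t₁).im := by rw [hEq]; rfl
      _ = θ t - θ t₁ := by simp [hθdef, Complex.sub_im]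
  -- Lipschitz bound
  obtain ⟨Kb, hKb⟩ := (isCompact_Icc : IsCompact (Set.Icc a b)).exists_bound_of_continuousOn
    (hf.mul (Complex.continuous_im.comp_continuousOn hzc))
  set K : ℝ := max Kb 1 with hKdef
  have hK : 0 < K := lt_of_lt_of_le one_pos (le_max_right _ _)
  have hlip : ∀ s ∈ Set.Icc a b, ∀ t ∈ Set.Icc a b, |θ t - θ s| ≤ K * |t - s| := by
    intro s hs t ht
    rw [← hint s hs t ht]
    have hb : ∀ x ∈ Set.uIoc s t, ‖f₁ x * (z x).im‖ ≤ K := by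
      intro x hx
      have hxI : x ∈ Set.Icc a b := by
        rcases Set.uIoc_subset_uIcc hx with h
        rw [Set.uIcc_eq_union] at h
        rcases h with h | h
        · exact ⟨le_trans hs.1 h.1, le_trans h.2 ht.2⟩
        · exact ⟨le_trans ht.1 h.1, le_trans h.2 hs.2⟩
      exact le_trans (hKb x hxI) (le_max_left _ _)
    have := intervalIntegral.norm_integral_le_of_norm_le_const hb
    simpa [Real.norm_eq_abs] using this
  have hθc : ContinuousOn θ (Set.Icc a b) :=
    (Complex.continuous_im.comp hEcont).continuousOn
  exact core_null_classes f₁ (fun t => (z t).im) φ a b α K hK θ hθc hint hlip hzero
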